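/- Let W be any finite set of Wang cubes containing the zero cube and let X ⊆ W^{ℤ³} be the subshift of valid tilings, with the zero cube as zero symbol. If X contains at least two configurations, then α(X) ≥ 2 and overline-β(X) ≥ 2. -/

import Mathlib

/-- The group `ℤ³`. -/
abbrev V3 : Type := ℤ × ℤ × ℤ

/-- The product topology on configurations `ι → A`, where the alphabet `A`
carries the discrete topology. -/
def prodTop (ι A : Type) : TopologicalSpace (ι → A) :=
  @Pi.topologicalSpace ι (fun _ => A) (fun _ => ⊥)

/-- The shift action: `(σ_v x)_u = x_{u - v}`. -/
def shift {ι A : Type} [Sub ι] (v : ι) (x : ι → A) : ι → A := fun u => x (u - v)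

/-- A subshift: a closed, shift-invariant set of configurations. -/
def IsSubshift {ι A : Type} [Sub ι] (X : Set (ι → A)) : Prop :=
  @IsClosed _ (prodTop ι A) X ∧ ∀ (v : ι), ∀ x ∈ X, shift v x ∈ X

/-- A subshift of finite type: defined by a finite set `F` of forbidden patterns
on a finite domain `D`. -/
def IsSFT {ι A : Type} [Add ι] (X : Set (ι → A)) : Prop :=
  ∃ (D : Finset ι) (F : Set (↥D → A)),
    X = {x : ι → A | ∀ v : ι, (fun u : ↥D => x (v + (u : ι))) ∉ F}

/-- The subspace topology on a set of configurations. -/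
def subTop {ι A : Type} (X : Set (ι → A)) : TopologicalSpace ↥X :=
  TopologicalSpace.induced Subtype.val (prodTop ι A)

/-- The ℤ-trace (projective ℤ-subdynamics) of a three-dimensional subshift. -/
def trace {A : Type} (X : Set (V3 → A)) : Set (ℤ → A) :=
  {y : ℤ → A | ∃ x ∈ X, ∀ n : ℤ, y n = x (0, 0, n)}

/-- `spa z Y`: the least `k` such that `Y` is `k`-sparse (`⊤` if there is none). -/
noncomputable def spa {A : Type} (z : A) (Y : Set (ℤ → A)) : ℕ∞ :=
  sInf {k : ℕ∞ | ∀ y ∈ Y, {n : ℤ | y n ≠ z}.encard ≤ k}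

/-- `ES z Y`: essential sparseness, the least `k` such that for some radius `r`,
the support of every `y ∈ Y` is covered by `k` intervals of radius `r`
(`⊤` if there is none). -/
noncomputable def ES {A : Type} (z : A) (Y : Set (ℤ → A)) : ℕ∞ :=
  sInf {k : ℕ∞ | ∃ r : ℕ, ∀ y ∈ Y, ∃ N : Set ℤ,
    N.encard ≤ k ∧ ∀ n : ℤ, y n ≠ z → ∃ m ∈ N, |n - m| ≤ (r : ℤ)}

/-- Vertical determinism: two configurations agreeing on the lower half-space
`{(i,j,k) : k < 0}` are equal. -/
def VertDet {A : Type} (X : Set (V3 → A)) : Prop :=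
  ∀ x ∈ X, ∀ y ∈ X, (∀ v : V3, v.2.2 < 0 → x v = y v) → x = y

/-- A 0-to-0 conjugacy between pointed three-dimensional subshifts:
a shift-equivariant homeomorphism sending the all-zero configuration to
the all-zero configuration (both subshifts contain their all-zero configurations). -/
def ZeroConj {A B : Type} (zA : A) (zB : B)
    (X : Set (V3 → A)) (X' : Set (V3 → B)) : Prop :=
  ((fun _ => zA) ∈ X) ∧ ((fun _ => zB) ∈ X') ∧
  ∃ φ : @Homeomorph ↥X ↥X' (subTop X) (subTop X'),
    (∀ (v : V3) (x : ↥X) (h : shift v x.1 ∈ X),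
      (φ ⟨shift v x.1, h⟩).1 = shift v (φ x).1) ∧
    (∀ x : ↥X, x.1 = (fun _ => zA) → (φ x).1 = (fun _ => zB))

/-- `α(X) = spa(T(X))`. -/
noncomputable def alphaInv {A : Type} (z : A) (X : Set (V3 → A)) : ℕ∞ :=
  spa z (trace X)

/-- `β(X) = ES(T(X))`. -/
noncomputable def betaInv {A : Type} (z : A) (X : Set (V3 → A)) : ℕ∞ :=
  ES z (trace X)

/-- `underline-α(X)`: the infimum of `α(X')` over all subshifts `X'`
0-to-0 conjugate to `X`. -/
noncomputable def ulAlpha {A : Type} (zA : A) (X : Set (V3 → A)) : ℕ∞ :=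
  sInf {k : ℕ∞ | ∃ (B : Type) (_ : Fintype B) (zB : B) (X' : Set (V3 → B)),
    IsSubshift X' ∧ ZeroConj zA zB X X' ∧ alphaInv zB X' = k}

/-- `underline-β(X)`: the infimum of `β(X')` over all subshifts `X'`
0-to-0 conjugate to `X`. -/
noncomputable def ulBeta {A : Type} (zA : A) (X : Set (V3 → A)) : ℕ∞ :=
  sInf {k : ℕ∞ | ∃ (B : Type) (_ : Fintype B) (zB : B) (X' : Set (V3 → B)),
    IsSubshift X' ∧ ZeroConj zA zB X X' ∧ betaInv zB X' = k}

/-- `overline-β(X)`: the supremum of `β(X')` over all subshifts `X'`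
0-to-0 conjugate to `X`. -/
noncomputable def olBeta {A : Type} (zA : A) (X : Set (V3 → A)) : ℕ∞ :=
  sSup {k : ℕ∞ | ∃ (B : Type) (_ : Fintype B) (zB : B) (X' : Set (V3 → B)),
    IsSubshift X' ∧ ZeroConj zA zB X X' ∧ betaInv zB X' = k}

/-- Directions of the faces of a Wang cube: `(i, true)` is `+eᵢ`, `(i, false)` is `-eᵢ`. -/
abbrev Dir : Type := Fin 3 × Bool

/-- The standard basis vectors of `ℤ³`. -/
def unitV : Fin 3 → V3 := ![(1, 0, 0), (0, 1, 0), (0, 0, 1)]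

/-- The vector of a direction. -/
def dirVec (s : Dir) : V3 := if s.2 then unitV s.1 else -unitV s.1

/-- The opposite direction. -/
def opp (s : Dir) : Dir := (s.1, !s.2)

/-- The zero cube: all six faces have the zero color. -/
def zeroCube {C : Type} (z : C) : Dir → C := fun _ => z

/-- The set of valid tilings by a finite set `W` of Wang cubes: colors of
matching faces of adjacent cubes agree. -/
def WangTilings {C : Type} (W : Finset (Dir → C)) :
    Set (V3 → {w : Dir → C // w ∈ W}) :=
  {x | ∀ (v : V3) (s : Dir), (x v).1 s = (x (v + dirVec s)).1 (opp s)}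

/-- ℓ∞ distance on `ℤ³`. -/
def dinf (u w : V3) : ℤ :=
  max |u.1 - w.1| (max |u.2.1 - w.2.1| |u.2.2 - w.2.2|)

/-- Reachability in the graph on the support of `x` with edges between
cells at ℓ∞-distance at most `r`. -/
def Reach {A : Type} (z : A) (r : ℕ) (x : V3 → A) : V3 → V3 → Prop :=
  Relation.ReflTransGen (fun u w => x u ≠ z ∧ x w ≠ z ∧ dinf u w ≤ (r : ℤ))

/-- `y` is an `r`-connected component configuration of `x`: it agrees with `x`
on one `r`-connected component of the support of `x` and is zero elsewhere. -/
def IsCompConf {A : Type} (z : A) (r : ℕ) (x y : V3 → A) : Prop :=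
  ∃ v₀ : V3, x v₀ ≠ z ∧
    (∀ u : V3, (x u ≠ z ∧ Reach z r x v₀ u) → y u = x u) ∧
    (∀ u : V3, ¬(x u ≠ z ∧ Reach z r x v₀ u) → y u = z)

/-- A set of configurations is `r`-zero-gluing if membership is equivalent to
membership of all `r`-connected component configurations. -/
def IsZeroGluing {A : Type} (z : A) (r : ℕ) (X : Set (V3 → A)) : Prop :=
  ∀ x : V3 → A, x ∈ X ↔ ∀ y : V3 → A, IsCompConf z r x y → y ∈ X

/-- The `r`-zero-gluing closure of `X`: the intersection of all `r`-zero-gluing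
subshifts containing `X`. -/
def ZGC {A : Type} (z : A) (r : ℕ) (X : Set (V3 → A)) : Set (V3 → A) :=
  ⋂₀ {Y : Set (V3 → A) | IsSubshift Y ∧ IsZeroGluing z r Y ∧ X ⊆ Y}

section
variable {C : Type} {W : Finset (Dir → C)}

lemma wang_shift {x : V3 → {w : Dir → C // w ∈ W}} (hx : x ∈ WangTilings W) (v : V3) :
    shift v x ∈ WangTilings W := by
  intro u s
  show (x (u - v)).1 s = (x (u + dirVec s - v)).1 (opp s)
  rw [add_sub_right_comm]
  exact hx (u - v) s

lemma wang_zero (zC : C) (hz : zeroCube zC ∈ W) :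
    (fun _ : V3 => (⟨zeroCube zC, hz⟩ : {w : Dir → C // w ∈ W})) ∈ WangTilings W :=
  fun _ _ => rfl

end
section
variable {C : Type} {W : Finset (Dir → C)}

open scoped Classical in
lemma wang_glue (zC : C) (hz : zeroCube zC ∈ W)
    {x : V3 → {w : Dir → C // w ∈ W}} (hx : x ∈ WangTilings W) (d : V3)
    (H : ∀ u : V3, x u = ⟨zeroCube zC, hz⟩ ∨ x (u + d) = ⟨zeroCube zC, hz⟩) :
    (fun u => if x u = ⟨zeroCube zC, hz⟩ then x (u - d) else x u) ∈ WangTilings W := by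
  intro u s
  have key : ∀ w : V3, x w ≠ ⟨zeroCube zC, hz⟩ → x (w - d) = ⟨zeroCube zC, hz⟩ := by
    intro w hw
    rcases H (w - d) with h | h
    · exact h
    · rw [sub_add_cancel] at h; exact absurd h hw
  have h3 : (x (u - d)).1 s = (x (u + dirVec s - d)).1 (opp s) := by
    have := hx (u - d) s; rwa [sub_add_eq_add_sub] at this
  have h2 : (x u).1 s = (x (u + dirVec s)).1 (opp s) := hx u s
  by_cases hu : x u = ⟨zeroCube zC, hz⟩ <;>
    by_cases hu' : x (u + dirVec s) = ⟨zeroCube zC, hz⟩ <;>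
    simp only [Set.mem_setOf_eq, hu, hu', if_true, if_false, ite_true, ite_false,
      if_pos, if_neg, hu, hu']
  · exact h3
  · rw [h3, key _ hu']; rw [hu] at h2; exact h2
  · rw [key _ hu] at h3; rw [h2, hu']; exact h3
  · exact h2

end
section
variable {C : Type} {W : Finset (Dir → C)}

lemma wang_pair (zC : C) (hz : zeroCube zC ∈ W)
    (hX : Set.Nontrivial (WangTilings W)) (d : V3) :
    ∃ z ∈ WangTilings W, ∃ v : V3,
      z v ≠ ⟨zeroCube zC, hz⟩ ∧ z (v + d) ≠ ⟨zeroCube zC, hz⟩ := by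
  classical
  -- get a configuration with a nonzero cell
  obtain ⟨a, ha, b, hb, hab⟩ := hX
  have hnz : ∃ x ∈ WangTilings W, ∃ v : V3, x v ≠ ⟨zeroCube zC, hz⟩ := by
    by_cases h : a = fun _ => (⟨zeroCube zC, hz⟩ : {w : Dir → C // w ∈ W})
    · refine ⟨b, hb, ?_⟩
      by_contra hc
      push_neg at hc
      apply hab
      rw [h]
      funext u
      exact (hc u).symm ▸ rfl
    · refine ⟨a, ha, ?_⟩
      by_contra hc
      push_neg at hc
      exact h (funext fun u => hc u)
  obtain ⟨x, hx, v, hv⟩ := hnz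
  by_cases hcase : ∃ u : V3, x u ≠ ⟨zeroCube zC, hz⟩ ∧ x (u + d) ≠ ⟨zeroCube zC, hz⟩
  · obtain ⟨u, h1, h2⟩ := hcase
    exact ⟨x, hx, u, h1, h2⟩
  · push_neg at hcase
    have H : ∀ u : V3, x u = ⟨zeroCube zC, hz⟩ ∨ x (u + d) = ⟨zeroCube zC, hz⟩ := by
      intro u
      by_cases h : x u = ⟨zeroCube zC, hz⟩
      · exact Or.inl h
      · exact Or.inr (hcase u h)
    refine ⟨_, wang_glue zC hz hx d H, v, ?_, ?_⟩
    · simpa [if_neg hv] using hv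
    · have hvd : x (v + d) = ⟨zeroCube zC, hz⟩ := hcase v hv
      simpa [if_pos hvd, add_sub_cancel_right] using hv

end
section
variable {C : Type} {W : Finset (Dir → C)}

lemma wang_closed :
    @IsClosed _ (prodTop V3 {w : Dir → C // w ∈ W}) (WangTilings W) := by
  letI : TopologicalSpace {w : Dir → C // w ∈ W} := ⊥
  haveI : DiscreteTopology {w : Dir → C // w ∈ W} := ⟨rfl⟩
  letI : TopologicalSpace (V3 → {w : Dir → C // w ∈ W}) := prodTop V3 _
  show IsClosed (WangTilings W)
  have heq : WangTilings W = ⋂ (p : V3 × Dir),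
      (fun x : V3 → {w : Dir → C // w ∈ W} => (x p.1, x (p.1 + dirVec p.2))) ⁻¹'
        {q : {w : Dir → C // w ∈ W} × {w : Dir → C // w ∈ W} |
          q.1.1 p.2 = q.2.1 (opp p.2)} := by
    ext x
    simp only [Set.mem_iInter, Set.mem_preimage, Set.mem_setOf_eq]
    exact ⟨fun h p => h p.1 p.2, fun h v s => h (v, s)⟩
  rw [heq]
  refine isClosed_iInter fun p => ?_
  have hc : Continuous (fun x : V3 → {w : Dir → C // w ∈ W} =>
      (x p.1, x (p.1 + dirVec p.2))) :=
    (continuous_apply p.1).prodMk (continuous_apply (p.1 + dirVec p.2))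
  exact (isClosed_discrete _).preimage hc

lemma wang_subshift : IsSubshift (WangTilings W) :=
  ⟨wang_closed, fun v x hx => wang_shift hx v⟩

end
/-- For any finite set of Wang cubes containing the zero cube whose tiling SFT
`X` contains at least two configurations, `α(X) ≥ 2` and `overline-β(X) ≥ 2`. -/
theorem statement10 {C : Type} [Fintype C] (zC : C) (W : Finset (Dir → C))
    (hz : zeroCube zC ∈ W)
    (hX : Set.Nontrivial (WangTilings W)) :
    2 ≤ alphaInv (⟨zeroCube zC, hz⟩ : {w : Dir → C // w ∈ W}) (WangTilings W) ∧
    2 ≤ olBeta (⟨zeroCube zC, hz⟩ : {w : Dir → C // w ∈ W}) (WangTilings W) := by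
  classical
  have key : ∀ m : ℤ, ∃ y ∈ trace (WangTilings W),
      y 0 ≠ (⟨zeroCube zC, hz⟩ : {w : Dir → C // w ∈ W}) ∧ y m ≠ ⟨zeroCube zC, hz⟩ := by
    intro m
    obtain ⟨z, hzX, v, h1, h2⟩ := wang_pair zC hz hX ((0, 0, m) : V3)
    refine ⟨fun n => z (((0, 0, n) : V3) + v),
      ⟨shift (-v) z, wang_shift hzX (-v), fun n => by simp [shift, sub_neg_eq_add]⟩, ?_, ?_⟩
    · have h : ((0, 0, (0 : ℤ)) : V3) + v = v := by
        obtain ⟨a, b, c⟩ := v; simp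
      simpa [h] using h1
    · have h : ((0, 0, m) : V3) + v = v + (0, 0, m) := add_comm _ _
      simpa [h] using h2
  constructor
  · refine le_sInf fun k hk => ?_
    obtain ⟨y, hy, h0, h1⟩ := key 1
    have hsub : ({0, 1} : Set ℤ) ⊆ {n : ℤ | y n ≠ ⟨zeroCube zC, hz⟩} := by
      intro n hn
      rcases hn with rfl | hn
      · exact h0
      · rcases hn with rfl; exact h1
    calc (2 : ℕ∞) = ({0, 1} : Set ℤ).encard := (Set.encard_pair (by norm_num)).symm
      _ ≤ {n : ℤ | y n ≠ ⟨zeroCube zC, hz⟩}.encard := Set.encard_le_encard hsub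
      _ ≤ k := hk y hy
  · have hβ : 2 ≤ betaInv (⟨zeroCube zC, hz⟩ : {w : Dir → C // w ∈ W}) (WangTilings W) := by
      refine le_sInf fun k hk => ?_
      obtain ⟨r, hr⟩ := hk
      by_contra hlt
      push_neg at hlt
      have hk1 : k ≤ 1 := by simpa using hlt
      obtain ⟨y, hy, h0, hm⟩ := key (2 * r + 1)
      obtain ⟨N, hN, hcov⟩ := hr y hy
      obtain ⟨m0, hm0, hd0⟩ := hcov 0 h0
      obtain ⟨m1, hm1, hd1⟩ := hcov (2 * r + 1) hm
      have hEq : m0 = m1 := Set.encard_le_one_iff.1 (hN.trans hk1) _ _ hm0 hm1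
      subst hEq
      rw [abs_le] at hd0 hd1
      omega
    have hmem : betaInv (⟨zeroCube zC, hz⟩ : {w : Dir → C // w ∈ W}) (WangTilings W) ∈
        {k : ℕ∞ | ∃ (B : Type) (_ : Fintype B) (zB : B) (X' : Set (V3 → B)),
          IsSubshift X' ∧
          ZeroConj (⟨zeroCube zC, hz⟩ : {w : Dir → C // w ∈ W}) zB (WangTilings W) X' ∧
          betaInv zB X' = k} := by
      refine ⟨{w : Dir → C // w ∈ W}, inferInstance, ⟨zeroCube zC, hz⟩, WangTilings W,
        wang_subshift, ⟨wang_zero zC hz, wang_zero zC hz, ?_⟩, rfl⟩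
      letI := subTop (WangTilings W)
      exact ⟨Homeomorph.refl _, fun v x h => rfl, fun x hx => hx⟩
    exact le_trans hβ (le_sSup hmem)
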